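/- Let n ≥ 1 and let μ_1, …, μ_n satisfy 1 = μ_1 ≤ μ_2 ≤ … ≤ μ_n. Let D'' be the n×n real matrix with D''(i,i) = −μ_{n−i+1} for 1 ≤ i ≤ n, D''(i,i+1) = μ_{n−i+1} − 1 for 1 ≤ i ≤ n−1, and 0 elsewhere, and let e_1 := (1,0,…,0). Then (e_1, D'') represents the unit exponential distribution. (D'' is the second canonical form representation obtained by time-reversing the first canonical form representation with rates μ and reversing the order of the states.) -/

import Mathlib

open Matrix

/-- `(π, D)` represents the unit exponential distribution:
`π · exp(tD) · 𝟙 = e^{-t}` for all `t ≥ 0`. -/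
def ReprUnitExp {n : ℕ} (π : Fin n → ℝ) (D : Matrix (Fin n) (Fin n) ℝ) : Prop :=
  ∀ t : ℝ, 0 ≤ t → (π ᵥ* NormedSpace.exp (t • D)) ⬝ᵥ (fun _ => 1) = Real.exp (-t)

/-- The second canonical form matrix obtained by time-reversing the first canonical
form with rates `μ` and reversing the order of the states: diagonal entries
`-μ (n-1-i)` and superdiagonal entries `μ (n-1-i) - 1` (`0`-based indexing). -/
def canonD2 {n : ℕ} (μ : Fin n → ℝ) : Matrix (Fin n) (Fin n) ℝ :=
  Matrix.of fun i j =>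
    if j = i then -μ i.rev else if (j : ℕ) = (i : ℕ) + 1 then μ i.rev - 1 else 0

attribute [local instance] Matrix.linftyOpNormedRing Matrix.linftyOpNormedAlgebra

/-- Row sums of `canonD2 μ` are all `-1` when `μ ⟨0, hn⟩ = 1`. -/
lemma canonD2_rowsum {n : ℕ} (hn : 0 < n) (μ : Fin n → ℝ) (hμ1 : μ ⟨0, hn⟩ = 1)
    (i : Fin n) : ∑ j, canonD2 μ i j = -1 := by
  have hsplit : ∀ j : Fin n, canonD2 μ i j =
      (if j = i then -μ i.rev else 0) +
      (if (j : ℕ) = (i : ℕ) + 1 then μ i.rev - 1 else 0) := by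
    intro j
    simp only [canonD2, Matrix.of_apply]
    by_cases h1 : j = i
    · subst h1
      simp
    · simp [h1]
  simp_rw [hsplit, Finset.sum_add_distrib]
  rw [Finset.sum_ite_eq' Finset.univ i (fun _ => -μ i.rev)]
  simp only [Finset.mem_univ, if_true]
  by_cases h : (i : ℕ) + 1 < n
  · have : (∑ j : Fin n, if (j : ℕ) = (i : ℕ) + 1 then μ i.rev - 1 else 0)
        = μ i.rev - 1 := by
      have := Finset.sum_ite_eq' Finset.univ (⟨(i : ℕ) + 1, h⟩ : Fin n)
        (fun _ => μ i.rev - 1)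
      simp only [Finset.mem_univ, if_true] at this
      rw [← this]
      apply Finset.sum_congr rfl
      intro j _
      congr 1
      simp [Fin.ext_iff]
    rw [this]; ring
  · have hrev : i.rev = ⟨0, hn⟩ := by
      have hi := i.isLt
      have := Fin.val_rev i
      apply Fin.ext
      simp only [Fin.val_rev]
      omega
    have : (∑ j : Fin n, if (j : ℕ) = (i : ℕ) + 1 then μ i.rev - 1 else 0) = 0 := by
      apply Finset.sum_eq_zero
      intro j _
      have := j.isLt
      rw [if_neg (by omega)]
    rw [this, hrev, hμ1]; ring

lemma canonD2_mulVec_one {n : ℕ} (hn : 0 < n) (μ : Fin n → ℝ) (hμ1 : μ ⟨0, hn⟩ = 1) :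
    canonD2 μ *ᵥ (fun _ => (1 : ℝ)) = fun _ => -1 := by
  funext i
  simp only [Matrix.mulVec, dotProduct, mul_one]
  exact canonD2_rowsum hn μ hμ1 i

lemma canonD2_pow_mulVec_one {n : ℕ} (hn : 0 < n) (μ : Fin n → ℝ) (hμ1 : μ ⟨0, hn⟩ = 1)
    (t : ℝ) (k : ℕ) :
    (t • canonD2 μ) ^ k *ᵥ (fun _ => (1 : ℝ)) = fun _ => (-t) ^ k := by
  induction k with
  | zero => simp [Matrix.one_mulVec]
  | succ k ih =>
    rw [pow_succ, ← Matrix.mulVec_mulVec, Matrix.smul_mulVec,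
      canonD2_mulVec_one hn μ hμ1]
    have : (t • fun _ : Fin n => (-1 : ℝ)) = ((-t) • fun _ : Fin n => (1 : ℝ)) := by
      funext i; simp
    rw [this, Matrix.mulVec_smul, ih]
    funext i
    simp [pow_succ]
    ring

theorem stmt7 {n : ℕ} (hn : 0 < n) (μ : Fin n → ℝ) (hμ1 : μ ⟨0, hn⟩ = 1)
    (hmono : Monotone μ) :
    ReprUnitExp (fun i => if (i : ℕ) = 0 then 1 else 0) (canonD2 μ) := by
  intro t ht
  set π : Fin n → ℝ := fun i => if (i : ℕ) = 0 then 1 else 0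
  rw [← Matrix.dotProduct_mulVec]
  -- the continuous linear functional A ↦ π ⬝ᵥ (A *ᵥ 1)
  let L₀ : Matrix (Fin n) (Fin n) ℝ →ₗ[ℝ] ℝ :=
    { toFun := fun A => π ⬝ᵥ (A *ᵥ fun _ => (1 : ℝ))
      map_add' := by
        intro A B
        simp [Matrix.add_mulVec, dotProduct_add]
      map_smul' := by
        intro c A
        simp [Matrix.smul_mulVec, dotProduct_smul] }
  let L : Matrix (Fin n) (Fin n) ℝ →L[ℝ] ℝ := LinearMap.toContinuousLinearMap L₀
  have hL : ∀ A, L A = π ⬝ᵥ (A *ᵥ fun _ => (1 : ℝ)) := fun _ => rfl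
  have key : L (NormedSpace.exp (t • canonD2 μ)) = Real.exp (-t) := by
    rw [NormedSpace.exp_eq_tsum ℝ]
    have hsum : Summable fun k : ℕ => ((k.factorial : ℝ)⁻¹ : ℝ) • (t • canonD2 μ) ^ k :=
      NormedSpace.expSeries_summable' (𝕂 := ℝ) (t • canonD2 μ)
    rw [L.map_tsum hsum]
    have : ∀ k : ℕ, L (((k.factorial : ℝ)⁻¹ : ℝ) • (t • canonD2 μ) ^ k) = ((k.factorial : ℝ)⁻¹ : ℝ) • (-t) ^ k := by
      intro k
      rw [_root_.map_smul, hL, canonD2_pow_mulVec_one hn μ hμ1]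
      congr 1
      simp only [dotProduct, π]
      rw [Finset.sum_eq_single (⟨0, hn⟩ : Fin n)]
      · simp
      · intro j _ hj
        rw [if_neg (by simpa [Fin.ext_iff] using hj), zero_mul]
      · simp
    simp_rw [this]
    rw [Real.exp_eq_exp_ℝ, NormedSpace.exp_eq_tsum ℝ]
  rw [← hL]
  exact key
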